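/- Let R be an F_p-algebra such that the Frobenius on R is surjective (R is semiperfect). Then the Witt vector Frobenius F : W(R) → W(R) is surjective, the augmentation ideal I_R = ker(W(R) → R) equals p·W(R), and consequently W(R)/p^n W(R) is isomorphic to the ring W_n(R) of n-truncated Witt vectors. -/
import Mathlib

section Aux

variable {p : ℕ} [hp : Fact p.Prime] {R : Type} [CommRing R] [CharP R p]

private lemma aux_frob_surj (hsp : Function.Surjective (fun x : R => x ^ p)) :
    Function.Surjective ⇑(WittVector.frobenius : WittVector p R →+* WittVector p R) := by
  intro y
  choose f hf using fun i => hsp (y.coeff i)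
  refine ⟨WittVector.mk p f, WittVector.ext fun i => ?_⟩
  rw [WittVector.coeff_frobenius_charP, WittVector.coeff_mk]
  exact hf i

private lemma aux_iter_versch_coeff_lt (x : WittVector p R) (n i : ℕ) (h : i < n) :
    (WittVector.verschiebung^[n] x).coeff i = 0 := by
  induction n generalizing i with
  | zero => omega
  | succ n ih =>
    rw [Function.iterate_succ_apply']
    cases i with
    | zero => exact WittVector.verschiebung_coeff_zero _
    | succ i => rw [WittVector.verschiebung_coeff_succ]; exact ih i (by omega)

private lemma aux_vf_iter (y : WittVector p R) (n : ℕ) :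
    WittVector.verschiebung^[n] ((⇑(WittVector.frobenius))^[n] y) = y * (p : WittVector p R) ^ n := by
  induction n generalizing y with
  | zero => simp
  | succ n ih =>
    rw [Function.iterate_succ_apply' (f := WittVector.verschiebung),
      Function.iterate_succ_apply' (f := ⇑(WittVector.frobenius)),
      (WittVector.verschiebung_frobenius_comm.iterate_left n).eq ((⇑(WittVector.frobenius))^[n] y),
      ih, WittVector.verschiebung_frobenius, pow_succ, mul_assoc]

private lemma aux_key (hsp : Function.Surjective (fun x : R => x ^ p)) (n : ℕ)
    (x : WittVector p R) :
    (∀ i < n, x.coeff i = 0) ↔ ∃ y, x = (p : WittVector p R) ^ n * y := by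
  constructor
  · intro h
    have hz : ∃ z, x = WittVector.verschiebung^[n] z := by
      refine ⟨WittVector.mk p (fun i => x.coeff (i + n)), WittVector.ext fun i => ?_⟩
      rcases lt_or_ge i n with hi | hi
      · rw [h i hi, aux_iter_versch_coeff_lt _ _ _ hi]
      · obtain ⟨k, rfl⟩ : ∃ k, i = k + n := ⟨i - n, by omega⟩
        rw [WittVector.iterate_verschiebung_coeff, WittVector.coeff_mk]
    obtain ⟨z, rfl⟩ := hz
    obtain ⟨y, rfl⟩ := (aux_frob_surj hsp).iterate n z
    exact ⟨y, by rw [aux_vf_iter, mul_comm]⟩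
  · rintro ⟨y, rfl⟩ i hi
    rw [mul_comm, ← aux_vf_iter]
    exact aux_iter_versch_coeff_lt _ _ _ hi

end Aux

theorem statement_4 (p : ℕ) [Fact p.Prime] (R : Type) [CommRing R] [CharP R p]
    (hsp : Function.Surjective (fun x : R => x ^ p)) (n : ℕ) :
    Function.Surjective ⇑(WittVector.frobenius : WittVector p R →+* WittVector p R) ∧
    (∀ x : WittVector p R, x.coeff 0 = 0 ↔ ∃ y, x = p * y) ∧
    RingHom.ker (WittVector.truncate n : WittVector p R →+* TruncatedWittVector p n R) =
      Ideal.span {(p : WittVector p R) ^ n} ∧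
    Nonempty ((WittVector p R ⧸ Ideal.span {(p : WittVector p R) ^ n}) ≃+*
      TruncatedWittVector p n R) := by
  have hker : RingHom.ker (WittVector.truncate n : WittVector p R →+* TruncatedWittVector p n R)
      = Ideal.span {(p : WittVector p R) ^ n} := by
    ext x
    rw [WittVector.mem_ker_truncate, aux_key hsp n x, Ideal.mem_span_singleton]
    exact Iff.rfl
  refine ⟨aux_frob_surj hsp, ?_, hker, ?_⟩
  · intro x
    have := aux_key hsp 1 x
    simp only [pow_one] at this
    rw [← this]
    constructor
    · intro h i hi
      interval_cases i
      exact h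
    · intro h
      exact h 0 one_pos
  · exact ⟨(Ideal.quotEquivOfEq hker.symm).trans
      (RingHom.quotientKerEquivOfSurjective (WittVector.truncate_surjective p n R))⟩
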